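/- Let A = (a_{i,j}) be a lower triangular n×n matrix over a field k, let C be the n×n matrix with entries c_{i,j} = 1 for i ≤ j and 0 otherwise, and set D = A·C. Then for every r ≥ 1 and every strictly increasing sequence 1 ≤ i_1 < i_2 < … < i_r ≤ n (with the convention i_0 = 0), the determinant of the r×r submatrix of D formed by the rows and columns with indices i_1, …, i_r equals the product over h = 1, …, r of the sums a_{i_h, i_{h-1}+1} + a_{i_h, i_{h-1}+2} + … + a_{i_h, i_h}. -/

import Mathlib

/-!
STATEMENT 0: Let `A` be a lower triangular `n × n` matrix over a field `k`, let `C` be the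
matrix with `c i j = 1` for `i ≤ j` and `0` otherwise, and `D = A * C`.  For every `r ≥ 1`
and every strictly increasing sequence `i₁ < … < i_r` of indices (encoded by a strictly
monotone map `f : Fin r → Fin n`), the determinant of the principal minor of `D` on the rows
and columns `f 0, …, f (r-1)` equals
`∏ h, (a_{i_h, i_{h-1}+1} + ⋯ + a_{i_h, i_h})`  (with the convention `i₀ = 0`).
Here, in `0`-indexed form, the `h`-th factor is the sum of `A (f h) j` over those columns `j`
with `j ≤ f h` and `f h' < j` for all `h' < h`.
-/

theorem stmt0 {k : Type*} [Field k] {n r : ℕ} (hr : 1 ≤ r)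
    (A : Matrix (Fin n) (Fin n) k)
    (hA : ∀ i j : Fin n, i < j → A i j = 0)
    (f : Fin r → Fin n) (hf : StrictMono f) :
    ((A * Matrix.of (fun i j : Fin n => if i ≤ j then (1 : k) else 0)).submatrix f f).det
      = ∏ h : Fin r,
          ∑ j ∈ Finset.univ.filter
              (fun j : Fin n => j ≤ f h ∧ ∀ h' : Fin r, h' < h → f h' < j),
            A (f h) j := by
  classical
  set S : Fin r → Finset (Fin n) :=
    fun h => Finset.univ.filter
      (fun j : Fin n => j ≤ f h ∧ ∀ h' : Fin r, h' < h → f h' < j) with hS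
  set M : Matrix (Fin r) (Fin r) k := Matrix.of fun g h => ∑ j ∈ S h, A (f g) j with hM
  set U : Matrix (Fin r) (Fin r) k := Matrix.of fun g h => if g ≤ h then (1 : k) else 0 with hU
  have hmem : ∀ (h : Fin r) (j : Fin n),
      j ∈ S h ↔ j ≤ f h ∧ ∀ h' : Fin r, h' < h → f h' < j := by
    intro h j; simp [hS]
  have hdlt : ∀ h₁ h₂ : Fin r, h₁ < h₂ → Disjoint (S h₁) (S h₂) := fun h₁ h₂ hlt =>
    Finset.disjoint_left.mpr fun j hj₁ hj₂ =>
      absurd (((hmem h₁ j).mp hj₁).1.trans_lt (((hmem h₂ j).mp hj₂).2 h₁ hlt)) (lt_irrefl _)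
  have hdisj : ∀ h₁ h₂ : Fin r, h₁ ≠ h₂ → Disjoint (S h₁) (S h₂) := by
    intro h₁ h₂ hne
    rcases hne.lt_or_gt with hc | hc
    · exact hdlt _ _ hc
    · exact (hdlt _ _ hc).symm
  have hunion : ∀ h : Fin r,
      (Finset.Iic h).biUnion S = Finset.univ.filter (· ≤ f h) := by
    intro h
    ext j
    simp only [Finset.mem_biUnion, Finset.mem_Iic, Finset.mem_filter, Finset.mem_univ, true_and]
    constructor
    · rintro ⟨h', hh', hj⟩
      exact ((hmem h' j).mp hj).1.trans (hf.monotone hh')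
    · intro hj
      have hne : (Finset.univ.filter (fun h' : Fin r => j ≤ f h')).Nonempty :=
        ⟨h, by simp [hj]⟩
      refine ⟨(Finset.univ.filter (fun h' : Fin r => j ≤ f h')).min' hne, ?_, ?_⟩
      · exact Finset.min'_le _ h (by simp [hj])
      · have hh₀mem := (Finset.univ.filter (fun h' : Fin r => j ≤ f h')).min'_mem hne
        rw [Finset.mem_filter] at hh₀mem
        rw [hmem]
        refine ⟨hh₀mem.2, fun h'' hlt => ?_⟩
        by_contra hcon
        push_neg at hcon
        exact absurd (Finset.min'_le _ h'' (by simp [hcon])) (not_le.mpr hlt)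
  have key : ((A * Matrix.of (fun i j : Fin n => if i ≤ j then (1 : k) else 0)).submatrix f f)
      = M * U := by
    ext g h
    rw [Matrix.submatrix_apply, Matrix.mul_apply, Matrix.mul_apply]
    have lhs : ∑ l, A (f g) l *
          (Matrix.of (fun i j : Fin n => if i ≤ j then (1 : k) else 0)) l (f h)
        = ∑ l ∈ Finset.univ.filter (· ≤ f h), A (f g) l := by
      rw [Finset.sum_filter]
      refine Finset.sum_congr rfl fun l _ => ?_
      by_cases hc : l ≤ f h <;> simp [hc]
    rw [lhs]
    have hIic : Finset.Iic h = Finset.univ.filter (· ≤ h) := by ext x; simp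
    have rhs : ∑ h', M g h' * U h' h = ∑ h' ∈ Finset.Iic h, ∑ j ∈ S h', A (f g) j := by
      rw [hIic, Finset.sum_filter]
      refine Finset.sum_congr rfl fun h' _ => ?_
      by_cases hc : h' ≤ h <;> simp [hM, hU, hc]
    rw [rhs, ← Finset.sum_biUnion (fun h₁ _ h₂ _ hne => hdisj h₁ h₂ hne), hunion]
  rw [key, Matrix.det_mul]
  have hUdet : U.det = 1 := by
    have htri : U.BlockTriangular id := by
      intro g h hlt
      simp only [id] at hlt
      simp [hU, not_le.mpr hlt]
    rw [Matrix.det_of_upperTriangular htri]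
    simp [hU]
  have hMdet : M.det = ∏ h : Fin r, ∑ j ∈ S h, A (f h) j := by
    have htri : M.BlockTriangular OrderDual.toDual := by
      intro g h hlt
      simp only [OrderDual.toDual_lt_toDual] at hlt
      rw [hM, Matrix.of_apply]
      exact Finset.sum_eq_zero fun j hj => hA _ _ (((hmem h j).mp hj).2 g hlt)
    rw [Matrix.det_of_lowerTriangular M htri]
    rfl
  rw [hUdet, hMdet, mul_one]
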